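/- arXiv:1606.02808 — 2 statements merged into one kernel-verified Lean document; each statement's English description precedes it below -/
import Mathlib

section
/- Let 1.6 < b < 1.9, ε = ln 4/(3b), and let a : [0,∞) → ℝ be the 1-periodic function with a(t) = 3b for t ∈ [n, n+ε] and a(t) = 0 for t ∈ (n+ε, n+1), for each nonnegative integer n. If x is the solution of x'(t) + a(t)x(t) + b·x(⌊t⌋) = 0 with x(0) = 1, then |x(n+1)| = b(1-ε)|x(n)| for each nonnegative integer n, hence |x(n)| = (b(1-ε))^n ≥ 1.136^n, so |x(n)| → ∞: the equation is unstable. -/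
open Set Filter

private lemma constIcc {f : ℝ → ℝ} {p q : ℝ} (hpq : p ≤ q)
    (hc : ContinuousOn f (Set.Icc p q))
    (hd : ∀ t ∈ Set.Ioo p q, HasDerivAt f 0 t) : f q = f p := by
  have hdiff : DifferentiableOn ℝ f (interior (Set.Icc p q)) := by
    rw [interior_Icc]
    exact fun t ht => (hd t ht).differentiableAt.differentiableWithinAt
  have h1 : MonotoneOn f (Set.Icc p q) := by
    apply monotoneOn_of_deriv_nonneg (convex_Icc p q) hc hdiff
    intro t ht
    rw [interior_Icc] at ht
    rw [(hd t ht).deriv]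
  have h2 : AntitoneOn f (Set.Icc p q) := by
    apply antitoneOn_of_deriv_nonpos (convex_Icc p q) hc hdiff
    intro t ht
    rw [interior_Icc] at ht
    rw [(hd t ht).deriv]
  have hp : p ∈ Set.Icc p q := ⟨le_refl p, hpq⟩
  have hq : q ∈ Set.Icc p q := ⟨hpq, le_refl q⟩
  exact le_antisymm (h2 hp hq hpq) (h1 hp hq hpq)

theorem stmt3 (b ε : ℝ) (hb1 : 1.6 < b) (hb2 : b < 1.9)
    (hε : ε = Real.log 4 / (3 * b))
    (a x : ℝ → ℝ)
    (ha1 : ∀ n : ℕ, ∀ t ∈ Set.Icc (n : ℝ) (n + ε), a t = 3 * b)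
    (ha2 : ∀ n : ℕ, ∀ t ∈ Set.Ioo ((n : ℝ) + ε) (n + 1), a t = 0)
    (hx0 : x 0 = 1)
    (hcont : ContinuousOn x (Set.Ici 0))
    (hsol : ∀ n : ℕ, ∀ t ∈ Set.Ioo (n : ℝ) (n + 1), t ≠ (n : ℝ) + ε →
      HasDerivAt x (-(a t * x t + b * x ((⌊t⌋ : ℤ) : ℝ))) t) :
    (∀ n : ℕ, |x ((n : ℝ) + 1)| = b * (1 - ε) * |x n|) ∧
    (∀ n : ℕ, |x n| = (b * (1 - ε)) ^ n) ∧
    (∀ n : ℕ, (1.136 : ℝ) ^ n ≤ |x n|) ∧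
    Filter.Tendsto (fun n : ℕ => |x n|) Filter.atTop Filter.atTop := by
  have hb0 : (0:ℝ) < b := by linarith
  have hlog2 : Real.log 2 < 0.6931471808 := Real.log_two_lt_d9
  have hlog2' : (0:ℝ) < Real.log 2 := Real.log_pos (by norm_num)
  have hlog4 : Real.log 4 = 2 * Real.log 2 := by
    rw [show (4:ℝ) = 2^2 by norm_num, Real.log_pow]; push_cast; ring
  have hε0 : 0 < ε := by
    rw [hε, hlog4]; positivity
  have hε1 : ε < 1 := by
    rw [hε, div_lt_one (by linarith : 0 < 3*b), hlog4]; linarith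
  -- the key recurrence
  have key : ∀ n : ℕ, x ((n:ℝ) + 1) = -(b * (1 - ε)) * x n := by
    intro n
    have hn0 : (0:ℝ) ≤ (n:ℝ) := Nat.cast_nonneg n
    -- floor on (n, n+1)
    have hfloor : ∀ t ∈ Set.Ioo ((n:ℝ)) ((n:ℝ)+1), x ((⌊t⌋ : ℤ) : ℝ) = x n := by
      intro t ht
      have : ⌊t⌋ = (n : ℤ) := by
        rw [Int.floor_eq_iff]
        constructor <;> push_cast <;> [exact ht.1.le; exact ht.2]
      rw [this]; push_cast; rfl
    -- Step 1: x (n + ε) = 0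
    have step1 : x ((n:ℝ) + ε) = 0 := by
      set g : ℝ → ℝ := fun t => Real.exp (3*b*t) * (x t + x n / 3) with hg
      have hgc : ContinuousOn g (Set.Icc (n:ℝ) ((n:ℝ)+ε)) := by
        apply ContinuousOn.mul
        · exact (Real.continuous_exp.comp (continuous_const.mul continuous_id)).continuousOn
        · apply ContinuousOn.add
          · exact hcont.mono (fun t ht => le_trans hn0 ht.1)
          · exact continuousOn_const
      have hgd : ∀ t ∈ Set.Ioo ((n:ℝ)) ((n:ℝ)+ε), HasDerivAt g 0 t := by
        intro t ht
        have htI : t ∈ Set.Ioo ((n:ℝ)) ((n:ℝ)+1) := ⟨ht.1, lt_trans ht.2 (by linarith)⟩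
        have hxd := hsol n t htI (ne_of_lt ht.2)
        rw [ha1 n t ⟨ht.1.le, ht.2.le⟩, hfloor t htI] at hxd
        have he : HasDerivAt (fun t => Real.exp (3*b*t)) (Real.exp (3*b*t) * (3*b)) t := by
          simpa using ((hasDerivAt_id t).const_mul (3*b)).exp
        have := he.mul (hxd.add_const (x n / 3))
        exact this.congr_deriv (by ring)
      have := constIcc (by linarith) hgc hgd
      rw [hg] at this
      simp only at this
      have hexp : Real.exp (3*b*((n:ℝ)+ε)) = Real.exp (3*b*(n:ℝ)) * 4 := by
        rw [show 3*b*((n:ℝ)+ε) = 3*b*(n:ℝ) + 3*b*ε by ring, Real.exp_add]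
        congr 1
        rw [hε, show 3*b*(Real.log 4/(3*b)) = Real.log 4 by field_simp]
        exact Real.exp_log (by norm_num)
      rw [hexp] at this
      have hexpne : Real.exp (3*b*(n:ℝ)) ≠ 0 := Real.exp_ne_zero _
      field_simp at this
      nlinarith [Real.exp_pos (3*b*(n:ℝ))]
    -- Step 2
    set h : ℝ → ℝ := fun t => x t + b * x n * t with hh
    have hhc : ContinuousOn h (Set.Icc ((n:ℝ)+ε) ((n:ℝ)+1)) := by
      apply ContinuousOn.add
      · exact hcont.mono (fun t ht => le_trans (by linarith) ht.1)
      · exact (continuous_const.mul continuous_id).continuousOn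
    have hhd : ∀ t ∈ Set.Ioo ((n:ℝ)+ε) ((n:ℝ)+1), HasDerivAt h 0 t := by
      intro t ht
      have htI : t ∈ Set.Ioo ((n:ℝ)) ((n:ℝ)+1) := ⟨lt_trans (by linarith) ht.1, ht.2⟩
      have hxd := hsol n t htI (ne_of_gt ht.1)
      rw [ha2 n t ht, hfloor t htI] at hxd
      have := hxd.add ((hasDerivAt_id t).const_mul (b * x n))
      exact this.congr_deriv (by ring)
    have h2 := constIcc (by linarith) hhc hhd
    rw [hh] at h2
    simp only at h2
    rw [step1] at h2
    -- h2 : x (n+1) + b * x n * (n+1) = 0 + b * x n * (n+ε)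
    linarith [h2]
  have hr1 : (1.136:ℝ) ≤ b * (1 - ε) := by
    have : b * (1 - ε) = b - Real.log 4 / 3 := by
      rw [hε]; field_simp
    rw [this, hlog4]; linarith
  have habs : ∀ n : ℕ, |x ((n:ℝ) + 1)| = b * (1 - ε) * |x n| := by
    intro n
    rw [key n, abs_mul, abs_neg, abs_of_pos (by nlinarith : (0:ℝ) < b * (1-ε))]
  have hpow : ∀ n : ℕ, |x n| = (b * (1 - ε)) ^ n := by
    intro n
    induction n with
    | zero => simp [hx0]
    | succ k ih =>
      have : ((k+1:ℕ):ℝ) = (k:ℝ) + 1 := by push_cast; ring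
      rw [this, habs k, ih, pow_succ]; ring
  refine ⟨habs, hpow, ?_, ?_⟩
  · intro n
    rw [hpow n]
    exact pow_le_pow_left₀ (by norm_num) hr1 n
  · have : (fun n : ℕ => |x n|) = (fun n : ℕ => (b * (1-ε)) ^ n) := funext hpow
    rw [this]
    exact tendsto_pow_atTop_atTop_of_one_lt (by linarith : 1 < b * (1-ε))
end

section
/- Let b = 1.8, ε = ln 4/(3b), and let a : [0,∞) → ℝ be the 1-periodic function with a(t) = 3b on [n, n+ε] and a(t) = 0.5 on (n+ε, n+1) for each nonnegative integer n. If x solves x'(t) + a(t)x(t) + b·x(⌊t⌋) = 0, then on [n, n+ε] the solution is x(t) = (4/3)x(n)e^{−3b(t−n)} − (1/3)x(n) with x(n+ε) = 0, on [n+ε, n+1] it is x(t) = 2b·x(n)(e^{−0.5(t−n−ε)} − 1), and |x(n+1)| = 2b(1 − e^{−0.5(1−ε)})|x(n)| > 1.1|x(n)|; hence the solution with x(0) = 1 satisfies |x(n)| → ∞ even though a(t) ≥ 0.5 for all t. -/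
open Set Filter

/-- A function continuous on `Icc A B` with zero derivative on `Ioo A B` is constant. -/
lemma constOn_aux {f : ℝ → ℝ} {A B : ℝ} (hc : ContinuousOn f (Icc A B))
    (hd : ∀ t ∈ Ioo A B, HasDerivAt f 0 t) : ∀ t ∈ Icc A B, f t = f A := by
  have hdiff : DifferentiableOn ℝ f (interior (Icc A B)) := by
    rw [interior_Icc]
    exact fun s hs => ((hd s hs).differentiableAt).differentiableWithinAt
  have hd0 : ∀ s ∈ interior (Icc A B), deriv f s = 0 := by
    rw [interior_Icc]
    exact fun s hs => (hd s hs).deriv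
  have hmono : MonotoneOn f (Icc A B) :=
    monotoneOn_of_deriv_nonneg (convex_Icc A B) hc hdiff fun s hs => (hd0 s hs).ge
  have hanti : AntitoneOn f (Icc A B) :=
    antitoneOn_of_deriv_nonpos (convex_Icc A B) hc hdiff fun s hs => (hd0 s hs).le
  intro t ht
  have hA : A ∈ Icc A B := ⟨le_refl A, le_trans ht.1 ht.2⟩
  exact le_antisymm (hanti hA ht ht.1) (hmono hA ht ht.1)

theorem stmt4 (b ε : ℝ) (hb : b = 1.8) (hε : ε = Real.log 4 / (3 * b))
    (a x : ℝ → ℝ)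
    (ha1 : ∀ n : ℕ, ∀ t ∈ Set.Icc (n : ℝ) (n + ε), a t = 3 * b)
    (ha2 : ∀ n : ℕ, ∀ t ∈ Set.Ioo ((n : ℝ) + ε) (n + 1), a t = 0.5)
    (hcont : ContinuousOn x (Set.Ici 0))
    (hsol : ∀ n : ℕ, ∀ t ∈ Set.Ioo (n : ℝ) (n + 1), t ≠ (n : ℝ) + ε →
      HasDerivAt x (-(a t * x t + b * x ((⌊t⌋ : ℤ) : ℝ))) t) :
    (∀ n : ℕ, ∀ t ∈ Set.Icc (n : ℝ) (n + ε),
      x t = (4 / 3) * x n * Real.exp (-(3 * b) * (t - n)) - (1 / 3) * x n) ∧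
    (∀ n : ℕ, x ((n : ℝ) + ε) = 0) ∧
    (∀ n : ℕ, ∀ t ∈ Set.Icc ((n : ℝ) + ε) (n + 1),
      x t = 2 * b * x n * (Real.exp (-0.5 * (t - n - ε)) - 1)) ∧
    (∀ n : ℕ, |x ((n : ℝ) + 1)| = 2 * b * (1 - Real.exp (-0.5 * (1 - ε))) * |x n|) ∧
    (1.1 : ℝ) < 2 * b * (1 - Real.exp (-0.5 * (1 - ε))) ∧
    (∀ t ≥ (0 : ℝ), 0.5 ≤ a t) ∧
    (x 0 = 1 → Filter.Tendsto (fun n : ℕ => |x n|) Filter.atTop Filter.atTop) := by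
  have hlog2 : Real.log 2 < 0.6931471808 := Real.log_two_lt_d9
  have hlog2pos : 0 < Real.log 2 := Real.log_pos (by norm_num)
  have hlog4 : Real.log 4 = 2 * Real.log 2 := by
    rw [show (4 : ℝ) = 2 ^ 2 by norm_num, Real.log_pow]; push_cast; ring
  have hε0 : 0 < ε := by rw [hε, hb, hlog4]; positivity
  have hε1 : ε < 1 := by rw [hε, hb, hlog4]; rw [div_lt_one (by norm_num)]; nlinarith
  have hkey : 3 * b * ε = Real.log 4 := by rw [hε, hb]; field_simp
  have hfl : ∀ n : ℕ, ∀ t ∈ Ioo (n : ℝ) (n + 1), ((⌊t⌋ : ℤ) : ℝ) = (n : ℝ) := by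
    intro n t ht
    have : ⌊t⌋ = (n : ℤ) := by
      rw [Int.floor_eq_iff]
      constructor
      · exact_mod_cast ht.1.le
      · push_cast; exact ht.2
    rw [this]; push_cast; ring
  -- Part 1
  have h1 : ∀ n : ℕ, ∀ t ∈ Set.Icc (n : ℝ) (n + ε),
      x t = (4 / 3) * x n * Real.exp (-(3 * b) * (t - n)) - (1 / 3) * x n := by
    intro n t ht
    set g : ℝ → ℝ := fun s => (x s + x n / 3) * Real.exp (3 * b * (s - n)) with hg
    have hsub : Icc (n : ℝ) (n + ε) ⊆ Ici 0 := fun s hs =>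
      le_trans (Nat.cast_nonneg n) hs.1
    have hgc : ContinuousOn g (Icc (n : ℝ) (n + ε)) := by
      apply ContinuousOn.mul
      · exact ((hcont.mono hsub).add continuousOn_const)
      · exact (Real.continuous_exp.comp
          (continuous_const.mul (continuous_id.sub continuous_const))).continuousOn
    have hgd : ∀ s ∈ Ioo (n : ℝ) (n + ε), HasDerivAt g 0 s := by
      intro s hs
      have hs' : s ∈ Ioo (n : ℝ) (n + 1) := ⟨hs.1, lt_of_lt_of_le hs.2 (by linarith)⟩
      have hsne : s ≠ (n : ℝ) + ε := ne_of_lt hs.2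
      have hx := hsol n s hs' hsne
      rw [ha1 n s ⟨hs.1.le, hs.2.le⟩, hfl n s hs'] at hx
      have hE : HasDerivAt (fun u : ℝ => Real.exp (3 * b * (u - n)))
          (Real.exp (3 * b * (s - n)) * (3 * b)) s := by
        have := (((hasDerivAt_id s).sub_const (n : ℝ)).const_mul (3 * b)).exp
        simpa using this
      have := (hx.add_const (x n / 3)).mul hE
      convert this using 1
      case e'_8 => rfl
      case e'_9 => ring
      case e'_4 => rfl
      case e'_5 => rfl
    have hgA := constOn_aux hgc hgd t ht
    have hgn : g (n : ℝ) = 4 / 3 * x n := by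
      simp only [hg]
      rw [show 3 * b * ((n : ℝ) - n) = 0 by ring, Real.exp_zero]
      ring
    rw [hgn] at hgA
    have hE0 : Real.exp (3 * b * (t - n)) ≠ 0 := Real.exp_ne_zero _
    rw [show -(3 * b) * (t - (n : ℝ)) = -(3 * b * (t - n)) by ring, Real.exp_neg]
    simp only [hg] at hgA
    field_simp
    linarith [hgA]
  -- Part 2
  have h2 : ∀ n : ℕ, x ((n : ℝ) + ε) = 0 := by
    intro n
    have := h1 n ((n : ℝ) + ε) ⟨by linarith, le_refl _⟩
    rw [this, show -(3 * b) * ((n : ℝ) + ε - n) = -(3 * b * ε) by ring, hkey,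
      Real.exp_neg, Real.exp_log (by norm_num : (0:ℝ) < 4)]
    ring
  -- Part 3
  have h3 : ∀ n : ℕ, ∀ t ∈ Set.Icc ((n : ℝ) + ε) (n + 1),
      x t = 2 * b * x n * (Real.exp (-0.5 * (t - n - ε)) - 1) := by
    intro n t ht
    set g : ℝ → ℝ := fun s => (x s + 2 * b * x n) * Real.exp (0.5 * (s - n - ε)) with hg
    have hsub : Icc ((n : ℝ) + ε) ((n : ℝ) + 1) ⊆ Ici 0 := fun s hs => by
      simp only [mem_Ici]
      have h0 : (0 : ℝ) ≤ (n : ℝ) + ε := by positivity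
      linarith [hs.1]
    have hgc : ContinuousOn g (Icc ((n : ℝ) + ε) ((n : ℝ) + 1)) := by
      apply ContinuousOn.mul
      · exact ((hcont.mono hsub).add continuousOn_const)
      · exact (Real.continuous_exp.comp
          (continuous_const.mul ((continuous_id.sub continuous_const).sub
            continuous_const))).continuousOn
    have hgd : ∀ s ∈ Ioo ((n : ℝ) + ε) ((n : ℝ) + 1), HasDerivAt g 0 s := by
      intro s hs
      have hs' : s ∈ Ioo (n : ℝ) (n + 1) := ⟨by linarith [hs.1], hs.2⟩
      have hsne : s ≠ (n : ℝ) + ε := ne_of_gt hs.1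
      have hx := hsol n s hs' hsne
      rw [ha2 n s hs, hfl n s hs'] at hx
      have hE : HasDerivAt (fun u : ℝ => Real.exp (0.5 * (u - n - ε)))
          (Real.exp (0.5 * (s - n - ε)) * 0.5) s := by
        have := ((((hasDerivAt_id s).sub_const (n : ℝ)).sub_const ε).const_mul (0.5 : ℝ)).exp
        simpa using this
      have := (hx.add_const (2 * b * x n)).mul hE
      convert this using 1
      case e'_8 => rfl
      case e'_9 => ring
      case e'_4 => rfl
      case e'_5 => rfl
    have hgA := constOn_aux hgc hgd t ht
    have hgn : g ((n : ℝ) + ε) = 2 * b * x n := by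
      simp only [hg]
      rw [h2 n, show (0.5 : ℝ) * ((n : ℝ) + ε - n - ε) = 0 by ring, Real.exp_zero]
      ring
    rw [hgn] at hgA
    have hE0 : Real.exp (0.5 * (t - n - ε)) ≠ 0 := Real.exp_ne_zero _
    rw [show -0.5 * (t - (n : ℝ) - ε) = -(0.5 * (t - n - ε)) by ring, Real.exp_neg]
    simp only [hg] at hgA
    field_simp
    linarith [hgA]
  -- Part 4
  have h4 : ∀ n : ℕ, |x ((n : ℝ) + 1)| =
      2 * b * (1 - Real.exp (-0.5 * (1 - ε))) * |x n| := by
    intro n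
    have heq := h3 n ((n : ℝ) + 1) ⟨by linarith, le_refl _⟩
    rw [show ((n : ℝ) + 1 - n - ε) = 1 - ε by ring] at heq
    have hE1 : Real.exp (-0.5 * (1 - ε)) < 1 := by
      apply Real.exp_lt_one_iff.mpr
      nlinarith
    rw [heq, show 2 * b * x n * (Real.exp (-0.5 * (1 - ε)) - 1) =
      (2 * b * (1 - Real.exp (-0.5 * (1 - ε)))) * (-(x n)) by ring, abs_mul, abs_neg,
      abs_of_pos (by rw [hb]; nlinarith)]
  -- Part 5
  have h5 : (1.1 : ℝ) < 2 * b * (1 - Real.exp (-0.5 * (1 - ε))) := by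
    set c : ℝ := 0.5 * (1 - ε) with hc
    have hcge : (0.371639 : ℝ) ≤ c := by
      have hεle : ε ≤ 0.25672118 := by
        rw [hε, hb, hlog4, div_le_iff₀ (by norm_num : (0:ℝ) < 3 * 1.8)]
        linarith
      rw [hc]
      linarith
    have hexpc : (1.44 : ℝ) < Real.exp c := by
      have h16 : Real.exp c = (Real.exp (c / 16)) ^ (16 : ℕ) := by
        rw [← Real.exp_nat_mul]; congr 1; push_cast; ring
      have hb1 : (1 : ℝ) + c / 16 ≤ Real.exp (c / 16) := by
        linarith [Real.add_one_le_exp (c / 16)]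
      have hb2 : (1 + (0.371639 : ℝ) / 16) ^ (16 : ℕ) ≤ (1 + c / 16) ^ (16 : ℕ) := by
        apply pow_le_pow_left₀ (by norm_num)
        linarith
      have hb3 : ((1 : ℝ) + c / 16) ^ (16 : ℕ) ≤ (Real.exp (c / 16)) ^ (16 : ℕ) := by
        apply pow_le_pow_left₀ (by linarith) hb1
      have hb4 : (1.44 : ℝ) < (1 + (0.371639 : ℝ) / 16) ^ (16 : ℕ) := by norm_num
      rw [h16]
      linarith
    have hEc : Real.exp (-0.5 * (1 - ε)) = (Real.exp c)⁻¹ := by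
      rw [show (-0.5 : ℝ) * (1 - ε) = -c by rw [hc]; ring, Real.exp_neg]
    rw [hEc, hb]
    have hpos : (0 : ℝ) < Real.exp c := Real.exp_pos c
    have : (Real.exp c)⁻¹ < 25 / 36 := by
      rw [inv_lt_comm₀ (by positivity) (by norm_num)]
      calc (25 / 36 : ℝ)⁻¹ = 1.44 := by norm_num
        _ < Real.exp c := hexpc
    nlinarith
  -- Part 6
  have h6 : ∀ t ≥ (0 : ℝ), 0.5 ≤ a t := by
    intro t ht
    set n : ℕ := ⌊t⌋.toNat with hn
    have hfn : ((n : ℕ) : ℝ) = ((⌊t⌋ : ℤ) : ℝ) := by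
      rw [hn]
      exact_mod_cast congrArg (fun z : ℤ => (z : ℝ)) (Int.toNat_of_nonneg (Int.floor_nonneg.2 ht))
    have hl : (n : ℝ) ≤ t := by rw [hfn]; exact Int.floor_le t
    have hr : t < (n : ℝ) + 1 := by rw [hfn]; exact Int.lt_floor_add_one t
    by_cases hcase : t ≤ (n : ℝ) + ε
    · rw [ha1 n t ⟨hl, hcase⟩, hb]; norm_num
    · rw [ha2 n t ⟨lt_of_not_ge hcase, hr⟩]
  refine ⟨h1, h2, h3, h4, h5, h6, ?_⟩
  -- Part 7
  intro hx0
  set K : ℝ := 2 * b * (1 - Real.exp (-0.5 * (1 - ε))) with hK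
  have hK1 : (1 : ℝ) < K := lt_trans (by norm_num) h5
  have hkey : ∀ n : ℕ, |x n| = K ^ n := by
    intro n
    induction n with
    | zero => simp [hx0]
    | succ m ih =>
      have : ((m + 1 : ℕ) : ℝ) = (m : ℝ) + 1 := by push_cast; ring
      rw [this, h4 m, ih, pow_succ]
      ring
  have := tendsto_pow_atTop_atTop_of_one_lt hK1
  exact this.congr fun n => (hkey n).symm
end
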